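/- arXiv:2203.12650 — 4 statements merged into one kernel-verified Lean document; each statement's English description precedes it below -/
import Mathlib

section
/- For any matrix M in SL(2,ℂ) and any vector v in ℂ², the maximum of ‖M⁻¹v‖, ‖Mv‖, and ‖M²v‖ is at least ‖v‖/2. -/
/-- The Euclidean norm of a vector in ℂ². -/
noncomputable def vnorm (v : Fin 2 → ℂ) : ℝ := ‖(WithLp.equiv 2 (Fin 2 → ℂ)).symm v‖

lemma vnorm_add_le (v w : Fin 2 → ℂ) : vnorm (v + w) ≤ vnorm v + vnorm w := by
  simpa [vnorm] using norm_add_le ((WithLp.equiv 2 (Fin 2 → ℂ)).symm v)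
    ((WithLp.equiv 2 (Fin 2 → ℂ)).symm w)

lemma vnorm_smul (t : ℂ) (v : Fin 2 → ℂ) : vnorm (t • v) = ‖t‖ * vnorm v := by
  simpa [vnorm] using norm_smul t ((WithLp.equiv 2 (Fin 2 → ℂ)).symm v)

lemma vnorm_nonneg (v : Fin 2 → ℂ) : 0 ≤ vnorm v := norm_nonneg _

/-- For any `M ∈ SL(2,ℂ)` and `v ∈ ℂ²`,
`max (‖M⁻¹v‖, ‖Mv‖, ‖M²v‖) ≥ ‖v‖/2`. -/
theorem sl2_three_block_gordon (M : Matrix (Fin 2) (Fin 2) ℂ) (hM : M.det = 1)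
    (v : Fin 2 → ℂ) :
    vnorm v / 2 ≤
      max (max (vnorm (M⁻¹.mulVec v)) (vnorm (M.mulVec v))) (vnorm ((M * M).mulVec v)) := by
  set t : ℂ := M.trace with ht
  have hinv : M⁻¹ = M.adjugate := by
    rw [Matrix.inv_def, hM]; simp
  have h1 : M⁻¹ + M = t • (1 : Matrix (Fin 2) (Fin 2) ℂ) := by
    rw [hinv]
    ext i j
    fin_cases i <;> fin_cases j <;>
      simp [Matrix.adjugate_fin_two, Matrix.trace_fin_two, Matrix.one_apply, ht] <;> ring
  have h2 : M * M + 1 = t • M := by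
    have hdet := hM
    rw [Matrix.det_fin_two] at hdet
    ext i j
    fin_cases i <;> fin_cases j <;>
      simp [Matrix.mul_apply, Matrix.trace_fin_two, Matrix.one_apply, ht,
        Fin.sum_univ_two] <;>
      first
        | ring1 | linear_combination hdet | linear_combination -hdet
        | linear_combination 2*hdet | linear_combination -2*hdet
  have hv1 : M⁻¹.mulVec v + M.mulVec v = t • v := by
    rw [← Matrix.add_mulVec, h1, Matrix.smul_mulVec, Matrix.one_mulVec]
  have hv2 : (M * M).mulVec v + v = t • M.mulVec v := by
    rw [← Matrix.smul_mulVec, ← h2, Matrix.add_mulVec, Matrix.one_mulVec]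
  set A := vnorm (M⁻¹.mulVec v)
  set B := vnorm (M.mulVec v)
  set C := vnorm ((M * M).mulVec v)
  have hA : A ≤ max (max A B) C := le_max_of_le_left (le_max_left _ _)
  have hB : B ≤ max (max A B) C := le_max_of_le_left (le_max_right _ _)
  have hC : C ≤ max (max A B) C := le_max_right _ _
  rcases le_or_gt ‖t‖ 1 with hle | hgt
  · -- v = t • Mv - M²v
    have hveq : v = t • M.mulVec v + (-1 : ℂ) • (M * M).mulVec v := by
      have := hv2
      funext i
      have := congrFun hv2 i
      simp only [Pi.add_apply, Pi.smul_apply, smul_eq_mul] at this ⊢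
      linear_combination this
    have : vnorm v ≤ ‖t‖ * B + 1 * C := by
      calc vnorm v ≤ vnorm (t • M.mulVec v) + vnorm ((-1 : ℂ) • (M * M).mulVec v) := by
            conv_lhs => rw [hveq]
            exact vnorm_add_le _ _
        _ = ‖t‖ * B + 1 * C := by rw [vnorm_smul, vnorm_smul]; simp only [norm_neg, norm_one, one_mul]; rfl
    have h2' : vnorm v ≤ B + C :=
      this.trans (by nlinarith [vnorm_nonneg (M.mulVec v)])
    have := h2'.trans (add_le_add hB hC)
    linarith
  · -- ‖v‖ ≤ ‖t‖‖v‖ = ‖t•v‖ ≤ A + B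
    have : ‖t‖ * vnorm v ≤ A + B := by
      rw [← vnorm_smul, ← hv1]; exact vnorm_add_le _ _
    have h2' : vnorm v ≤ A + B := by nlinarith [vnorm_nonneg v]
    have := h2'.trans (add_le_add hA hB)
    linarith
end

section
/- Suppose A, B ∈ SU(1,1) are elliptic (trace in (−2,2)) and AB ≠ BA. Then the semigroup generated by A and B (all finite products of A's and B's with positive exponents) contains a hyperbolic element, i.e. an element whose trace lies in ℝ ∖ [−2,2]. -/
open Matrix Complex

/-- The signature matrix `j = diag(−1, 1)`. -/
def jm : Matrix (Fin 2) (Fin 2) ℂ := !![-1, 0; 0, 1]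

/-- Membership in `SU(1,1)`: determinant one and `A* j A = j`. -/
def SU11 (A : Matrix (Fin 2) (Fin 2) ℂ) : Prop := A.det = 1 ∧ Aᴴ * jm * A = jm

lemma su11_entries {A : Matrix (Fin 2) (Fin 2) ℂ} (hA : SU11 A) :
    A 1 1 = (starRingEnd ℂ) (A 0 0) ∧ A 1 0 = (starRingEnd ℂ) (A 0 1) ∧
      A 0 0 * (starRingEnd ℂ) (A 0 0) - A 0 1 * (starRingEnd ℂ) (A 0 1) = 1 := by
  obtain ⟨hdet, hj⟩ := hA
  rw [Matrix.det_fin_two] at hdet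
  have e1 := congrFun (congrFun hj 0) 0
  have e2 := congrFun (congrFun hj 0) 1
  have e3 := congrFun (congrFun hj 1) 1
  simp [jm, Matrix.mul_apply, Fin.sum_univ_two, Matrix.conjTranspose_apply] at e1 e2 e3
  set a := A 0 0; set b := A 0 1; set c := A 1 0; set d := A 1 1
  have e2c : -(a * (starRingEnd ℂ) b) + c * (starRingEnd ℂ) d = 0 := by
    have := congrArg (starRingEnd ℂ) e2
    simpa using this
  have ha0 : a ≠ 0 := by
    intro h
    rw [h] at e1
    simp at e1
    have : ((normSq c : ℝ) : ℂ) = -1 := by rw [← Complex.mul_conj]; linear_combination e1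
    have h2 : (normSq c : ℝ) = -1 := by exact_mod_cast this
    nlinarith [normSq_nonneg c]
  have hd : d = (starRingEnd ℂ) a := by
    have : (starRingEnd ℂ) d = a := by
      linear_combination a * e3 - (starRingEnd ℂ) d * hdet - b * e2c
    rw [← this, Complex.conj_conj]
  have hc : c = (starRingEnd ℂ) b := by
    have h2 : a * (c - (starRingEnd ℂ) b) = 0 := by
      rw [hd] at e2c
      simp only [Complex.conj_conj] at e2c
      linear_combination e2c
    rcases mul_eq_zero.mp h2 with h | h
    · exact absurd h ha0
    · exact sub_eq_zero.mp h
  refine ⟨hd, hc, ?_⟩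
  rw [hd, hc] at hdet
  linear_combination hdet

lemma su11_mul {A B : Matrix (Fin 2) (Fin 2) ℂ} (hA : SU11 A) (hB : SU11 B) : SU11 (A * B) := by
  refine ⟨by rw [Matrix.det_mul, hA.1, hB.1, one_mul], ?_⟩
  have : (A * B)ᴴ * jm * (A * B) = Bᴴ * (Aᴴ * jm * A) * B := by
    rw [Matrix.conjTranspose_mul]; noncomm_ring
  rw [this, hA.2, hB.2]

noncomputable def SU11sub : Subsemigroup (Matrix (Fin 2) (Fin 2) ℂ) where
  carrier := {M | SU11 M}
  mul_mem' := su11_mul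

lemma su11_trace_im {A : Matrix (Fin 2) (Fin 2) ℂ} (hA : SU11 A) : A.trace.im = 0 := by
  rw [Matrix.trace_fin_two, (su11_entries hA).1]
  simp

lemma ch_fin_two (M : Matrix (Fin 2) (Fin 2) ℂ) : M * M = M.trace • M - M.det • (1 : Matrix (Fin 2) (Fin 2) ℂ) := by
  ext i j
  fin_cases i <;> fin_cases j <;>
    simp [Matrix.mul_apply, Fin.sum_univ_two, Matrix.trace_fin_two, Matrix.det_fin_two,
      Matrix.one_apply] <;> ring

lemma su11_inv {A : Matrix (Fin 2) (Fin 2) ℂ} (hA : SU11 A) :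
    A * (A.trace • (1 : Matrix (Fin 2) (Fin 2) ℂ) - A) = 1 ∧
      (A.trace • (1 : Matrix (Fin 2) (Fin 2) ℂ) - A) * A = 1 := by
  have h := ch_fin_two A
  rw [hA.1, one_smul] at h
  constructor
  · rw [mul_sub, h]; noncomm_ring
  · rw [sub_mul, h]; noncomm_ring

lemma exists_pow_near_one {z : ℂ} (hz : ‖z‖ = 1) {ε : ℝ} (hε : 0 < ε) :
    ∃ m : ℕ, 1 ≤ m ∧ ‖z ^ m - 1‖ < ε := by
  have hx : ∀ n : ℕ, z ^ (n + 1) ∈ Metric.sphere (0 : ℂ) 1 := by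
    intro n
    simp [mem_sphere_iff_norm, norm_pow, hz]
  obtain ⟨a, -, φ, hφ, hlim⟩ := (isCompact_sphere (0 : ℂ) 1).tendsto_subseq hx
  rw [Metric.tendsto_atTop] at hlim
  obtain ⟨N, hN⟩ := hlim (ε / 2) (by linarith)
  have h1 := hN N le_rfl
  have h2 := hN (N + 1) (Nat.le_succ N)
  have hd : dist (z ^ (φ (N + 1) + 1)) (z ^ (φ N + 1)) < ε := by
    calc dist (z ^ (φ (N + 1) + 1)) (z ^ (φ N + 1))
        ≤ dist (z ^ (φ (N + 1) + 1)) a + dist (z ^ (φ N + 1)) a := dist_triangle_right _ _ _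
      _ < ε := by simp only [Function.comp_apply] at h1 h2; linarith
  refine ⟨φ (N + 1) - φ N, ?_, ?_⟩
  · have := hφ (show N < N + 1 by omega)
    omega
  · have hm : φ N + 1 + (φ (N + 1) - φ N) = φ (N + 1) + 1 := by
      have := hφ (show N < N + 1 by omega); omega
    have : ‖z ^ (φ (N + 1) + 1) - z ^ (φ N + 1)‖ = ‖z ^ (φ N + 1)‖ * ‖z ^ (φ (N + 1) - φ N) - 1‖ := by
      rw [← norm_mul, mul_sub, mul_one, ← pow_add, hm]
    rw [dist_eq_norm, this, norm_pow, hz, one_pow, one_mul] at hd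
    exact hd

lemma exists_pow_near_one' {z : ℂ} (hz : ‖z‖ = 1) {ε : ℝ} (hε : 0 < ε) :
    ∃ m : ℕ, 2 ≤ m ∧ ‖z ^ m - 1‖ < ε := by
  obtain ⟨m, hm1, hm⟩ := exists_pow_near_one hz (half_pos hε)
  refine ⟨2 * m, by omega, ?_⟩
  have : z ^ (2 * m) - 1 = (z ^ m + 1) * (z ^ m - 1) := by ring
  rw [this, norm_mul]
  have h1 : ‖z ^ m + 1‖ ≤ 2 := by
    calc ‖z ^ m + 1‖ ≤ ‖z ^ m‖ + ‖(1 : ℂ)‖ := norm_add_le _ _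
      _ = 2 := by rw [norm_pow, hz]; norm_num
  calc ‖z ^ m + 1‖ * ‖z ^ m - 1‖ ≤ 2 * ‖z ^ m - 1‖ := by
        exact mul_le_mul_of_nonneg_right h1 (norm_nonneg _)
    _ < 2 * (ε / 2) := by linarith
    _ = ε := by ring

lemma pow_rep (M : Matrix (Fin 2) (Fin 2) ℂ) (hdet : M.det = 1) (l m : ℂ)
    (hlm : l * m = 1) (hne : l - m ≠ 0) (ht : M.trace = l + m) :
    ∀ n : ℕ, M ^ n = ((l ^ n - m ^ n) / (l - m)) • M
      + ((l * m ^ n - m * l ^ n) / (l - m)) • (1 : Matrix (Fin 2) (Fin 2) ℂ) := by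
  intro n
  induction n with
  | zero =>
    have h1 : (l ^ 0 - m ^ 0 : ℂ) / (l - m) = 0 := by simp
    have h2 : (l * m ^ 0 - m * l ^ 0 : ℂ) / (l - m) = 1 := by
      field_simp
    rw [pow_zero, h1, h2, zero_smul, one_smul, zero_add]
  | succ n ih =>
    have e1 : (l ^ (n+1) - m ^ (n+1)) / (l - m)
        = ((l ^ n - m ^ n) / (l - m)) * (l + m) + (l * m ^ n - m * l ^ n) / (l - m) := by
      field_simp; ring
    have e2 : (l * m ^ (n+1) - m * l ^ (n+1)) / (l - m) = -((l ^ n - m ^ n) / (l - m)) := by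
      rw [← neg_div, div_eq_div_iff hne hne]
      linear_combination (l - m) * (m ^ n - l ^ n) * hlm
    rw [pow_succ, ih, e1, e2, add_mul, smul_mul_assoc, smul_mul_assoc, one_mul,
      ch_fin_two, hdet, ht, one_smul]
    module

lemma spow_mem {α : Type*} [Monoid α] {S : Subsemigroup α} {a : α} (h : a ∈ S) :
    ∀ n : ℕ, 1 ≤ n → a ^ n ∈ S := by
  intro n hn
  induction n with
  | zero => omega
  | succ k ih =>
    rcases Nat.eq_or_lt_of_le hn with h1 | h1
    · simpa [← h1] using h
    · rw [pow_succ]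
      exact S.mul_mem (ih (by omega)) h

lemma inv_mem_closure {S : Subsemigroup (Matrix (Fin 2) (Fin 2) ℂ)}
    {M : Matrix (Fin 2) (Fin 2) ℂ} (hM : SU11 M) (htr : M.trace.im = 0)
    (htr2 : M.trace.re ∈ Set.Ioo (-2 : ℝ) 2) (hMS : M ∈ S) :
    M.trace • (1 : Matrix (Fin 2) (Fin 2) ℂ) - M ∈ closure (S : Set (Matrix (Fin 2) (Fin 2) ℂ)) := by
  obtain ⟨ht1, ht2⟩ := htr2
  set t := M.trace with htdef
  set x := t.re / 2 with hxdef
  have hx2 : x ^ 2 < 1 := by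
    have : -1 < x := by rw [hxdef]; linarith
    have h2 : x < 1 := by rw [hxdef]; linarith
    nlinarith
  set y := Real.sqrt (1 - x ^ 2) with hydef
  have hy : 0 < y := Real.sqrt_pos.mpr (by linarith)
  have hy2 : y ^ 2 = 1 - x ^ 2 := Real.sq_sqrt (by linarith)
  set l : ℂ := ⟨x, y⟩ with hldef
  set m : ℂ := ⟨x, -y⟩ with hmdef
  have hl1 : l * m = 1 := by
    rw [Complex.ext_iff]
    constructor
    · simp [hldef, hmdef, Complex.mul_re]; nlinarith
    · simp [hldef, hmdef, Complex.mul_im]; ring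
  have hne : l - m ≠ 0 := by
    intro h
    have := congrArg Complex.im h
    simp [hldef, hmdef] at this
    linarith
  have ht' : M.trace = l + m := by
    rw [Complex.ext_iff]
    constructor
    · simp [hldef, hmdef, hxdef]; rfl
    · simp [hldef, hmdef]
      exact htr
  have hnorm : ‖l‖ = 1 := by
    have h1 : ‖l‖ ^ 2 = 1 := by
      rw [Complex.sq_norm, Complex.normSq_mk]; nlinarith
    nlinarith [norm_nonneg l]
  have hl0 : l ≠ 0 := by intro h; rw [h] at hnorm; simp at hnorm
  have hm0 : m ≠ 0 := fun h => by simp [h] at hl1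
  have hseq : ∀ k : ℕ, ∃ m' : ℕ, 2 ≤ m' ∧ ‖l ^ m' - 1‖ < 1 / (k + 1) :=
    fun k => exists_pow_near_one' hnorm (by positivity)
  choose ms hms1 hms2 using hseq
  set ν : ℕ → ℂ := fun k => l ^ ms k with hνdef
  have hν : Filter.Tendsto ν Filter.atTop (nhds 1) := by
    rw [tendsto_iff_norm_sub_tendsto_zero]
    exact squeeze_zero (fun k => norm_nonneg _) (fun k => le_of_lt (hms2 k))
      tendsto_one_div_add_atTop_nhds_zero_nat
  have hν0 : ∀ k, ν k ≠ 0 := fun k => pow_ne_zero _ hl0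
  have hl_pow : ∀ k, l ^ (ms k - 1) = ν k * m := by
    intro k
    have h1 : l ^ (ms k - 1) * l = ν k := by
      rw [← pow_succ, hνdef]
      congr 1
      have := hms1 k; omega
    calc l ^ (ms k - 1) = l ^ (ms k - 1) * (l * m) := by rw [hl1, mul_one]
      _ = (l ^ (ms k - 1) * l) * m := by ring
      _ = ν k * m := by rw [h1]
  have hm_pow : ∀ k, m ^ (ms k - 1) = (ν k)⁻¹ * l := by
    intro k
    have h2 : (l ^ (ms k - 1)) * (m ^ (ms k - 1)) = 1 := by
      rw [← mul_pow, hl1, one_pow]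
    have h3 : m ^ (ms k - 1) = (l ^ (ms k - 1))⁻¹ :=
      eq_inv_of_mul_eq_one_left (by rw [mul_comm]; exact h2)
    rw [h3, hl_pow, mul_inv, show m⁻¹ = l from inv_eq_of_mul_eq_one_left hl1]
  have hrep := pow_rep M hM.1 l m hl1 hne ht'
  have hfk : ∀ k, M ^ (ms k - 1)
      = ((ν k * m - (ν k)⁻¹ * l) / (l - m)) • M
        + ((l * ((ν k)⁻¹ * l) - m * (ν k * m)) / (l - m)) • (1 : Matrix (Fin 2) (Fin 2) ℂ) := by
    intro k
    rw [hrep (ms k - 1), hl_pow, hm_pow]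
  have c1 : Filter.Tendsto (fun k => (ν k * m - (ν k)⁻¹ * l) / (l - m)) Filter.atTop
      (nhds (-1)) := by
    have : Filter.Tendsto (fun k => (ν k * m - (ν k)⁻¹ * l) / (l - m)) Filter.atTop
        (nhds (((1 : ℂ) * m - (1 : ℂ)⁻¹ * l) / (l - m))) :=
      (((hν.mul_const m).sub ((hν.inv₀ one_ne_zero).mul_const l)).div_const _)
    convert this using 2
    rw [eq_div_iff hne]
    simp only [inv_one, one_mul]
    ring
  have c2 : Filter.Tendsto (fun k => (l * ((ν k)⁻¹ * l) - m * (ν k * m)) / (l - m)) Filter.atTop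
      (nhds t) := by
    have h0 : Filter.Tendsto (fun k => (l * ((ν k)⁻¹ * l) - m * (ν k * m)) / (l - m)) Filter.atTop
        (nhds ((l * ((1 : ℂ)⁻¹ * l) - m * ((1 : ℂ) * m)) / (l - m))) :=
      (((((hν.inv₀ one_ne_zero).mul_const l).const_mul l).sub
        ((hν.mul_const m).const_mul m)).div_const _)
    convert h0 using 2
    rw [eq_div_iff hne, htdef, ht']
    simp only [inv_one, one_mul]
    ring
  have hmem : ∀ k, M ^ (ms k - 1) ∈ S := fun k => spow_mem hMS _ (by have := hms1 k; omega)
  have htend : Filter.Tendsto (fun k => M ^ (ms k - 1)) Filter.atTop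
      (nhds ((-1 : ℂ) • M + t • (1 : Matrix (Fin 2) (Fin 2) ℂ))) := by
    simp only [hfk]
    exact (c1.smul_const M).add (c2.smul_const 1)
  have heq : (-1 : ℂ) • M + t • (1 : Matrix (Fin 2) (Fin 2) ℂ) = t • 1 - M := by module
  rw [← heq]
  exact mem_closure_of_tendsto htend (Filter.Eventually.of_forall hmem)

lemma key_real (a1 a2 b1 b2 c1 c2 d1 d2 : ℝ)
    (haR : a1^2 + a2^2 - (b1^2 + b2^2) = 1)
    (ha1 : a1^2 < 1)
    (hnc : ¬ (b2*d1 - b1*d2 = 0 ∧ a2*d1 - c2*b1 = 0 ∧ a2*d2 - c2*b2 = 0)) :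
    0 < (a2*d1 - c2*b1)^2 + (a2*d2 - c2*b2)^2 - (b2*d1 - b1*d2)^2 := by
  set u1 := a2*d1 - c2*b1 with hu1
  set u2 := a2*d2 - c2*b2 with hu2
  set m := b2*d1 - b1*d2 with hm
  by_cases hm0 : m = 0
  · rw [hm0]
    have h : u1 ≠ 0 ∨ u2 ≠ 0 := by
      by_contra h
      push_neg at h
      exact hnc ⟨hm0, h.1, h.2⟩
    rcases h with h | h
    · nlinarith [sq_nonneg u2, sq_pos_of_ne_zero h]
    · nlinarith [sq_nonneg u1, sq_pos_of_ne_zero h]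
  · have hb : b1^2 + b2^2 < a2^2 := by nlinarith
    have hcs : a2^2 * m^2 ≤ (u1^2 + u2^2) * (b1^2 + b2^2) := by
      have hid : u1*b2 - u2*b1 = a2 * m := by rw [hu1, hu2, hm]; ring
      have hid2 : (u1*b2 - u2*b1)^2 = (a2*m)^2 := by rw [hid]
      nlinarith [hid2, sq_nonneg (u1*b1 + u2*b2)]
    have hmpos : 0 < m^2 := sq_pos_of_ne_zero hm0
    nlinarith [hcs, hmpos, mul_pos hmpos (show (0:ℝ) < a2^2 - (b1^2+b2^2) by linarith),
      sq_nonneg b1, sq_nonneg b2]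

/-- If `A, B ∈ SU(1,1)` are elliptic (real trace in `(−2,2)`) and do not commute, then the
semigroup generated by `A` and `B` contains a hyperbolic element, i.e. an element whose
trace is real with absolute value `> 2`. -/
theorem su11_noncommuting_elliptic_semigroup_hyperbolic
    (A B : Matrix (Fin 2) (Fin 2) ℂ) (hA : SU11 A) (hB : SU11 B)
    (hAim : A.trace.im = 0) (hAtr : A.trace.re ∈ Set.Ioo (-2 : ℝ) 2)
    (hBim : B.trace.im = 0) (hBtr : B.trace.re ∈ Set.Ioo (-2 : ℝ) 2)
    (hcomm : A * B ≠ B * A) :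
    ∃ C ∈ Subsemigroup.closure {A, B}, C.trace.im = 0 ∧ 2 < |C.trace.re| := by
  obtain ⟨hA11, hA10, hAn⟩ := su11_entries hA
  obtain ⟨hB11, hB10, hBn⟩ := su11_entries hB
  set a := A 0 0 with hadef
  set b := A 0 1 with hbdef
  set c := B 0 0 with hcdef
  set d := B 0 1 with hddef
  have hAeq : A = !![a, b; (starRingEnd ℂ) b, (starRingEnd ℂ) a] := by
    ext i j; fin_cases i <;> fin_cases j <;> simp [hA11, hA10, hadef, hbdef]
  have hBeq : B = !![c, d; (starRingEnd ℂ) d, (starRingEnd ℂ) c] := by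
    ext i j; fin_cases i <;> fin_cases j <;> simp [hB11, hB10, hcdef, hddef]
  have hAtr' : A.trace = a + (starRingEnd ℂ) a := by rw [Matrix.trace_fin_two, hA11]
  have hBtr' : B.trace = c + (starRingEnd ℂ) c := by rw [Matrix.trace_fin_two, hB11]
  have hAieq : A.trace • (1 : Matrix (Fin 2) (Fin 2) ℂ) - A
      = !![(starRingEnd ℂ) a, -b; -((starRingEnd ℂ) b), a] := by
    rw [hAtr', hAeq]
    ext i j; fin_cases i <;> fin_cases j <;>
      simp [Matrix.smul_apply, Matrix.one_apply] <;> ring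
  have hBieq : B.trace • (1 : Matrix (Fin 2) (Fin 2) ℂ) - B
      = !![(starRingEnd ℂ) c, -d; -((starRingEnd ℂ) d), c] := by
    rw [hBtr', hBeq]
    ext i j; fin_cases i <;> fin_cases j <;>
      simp [Matrix.smul_apply, Matrix.one_apply] <;> ring
  have haR : a.re^2 + a.im^2 - (b.re^2 + b.im^2) = 1 := by
    have h := congrArg Complex.re hAn
    simp [Complex.mul_re] at h
    linear_combination h
  have hcR : c.re^2 + c.im^2 - (d.re^2 + d.im^2) = 1 := by
    have h := congrArg Complex.re hBn
    simp [Complex.mul_re] at h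
    linear_combination h
  have ha1 : a.re^2 < 1 := by
    have h : A.trace.re = 2 * a.re := by rw [hAtr']; simp; ring
    obtain ⟨h1, h2⟩ := hAtr
    rw [h] at h1 h2
    nlinarith
  have hc1 : c.re^2 < 1 := by
    have h : B.trace.re = 2 * c.re := by rw [hBtr']; simp; ring
    obtain ⟨h1, h2⟩ := hBtr
    rw [h] at h1 h2
    nlinarith
  have hnc : ¬ (b.im*d.re - b.re*d.im = 0 ∧ a.im*d.re - c.im*b.re = 0
      ∧ a.im*d.im - c.im*b.im = 0) := by
    rintro ⟨h1, h2, h3⟩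
    apply hcomm
    rw [hAeq, hBeq]
    ext i j
    fin_cases i <;> fin_cases j <;>
      (apply Complex.ext <;>
        simp [Matrix.mul_apply, Fin.sum_univ_two, Complex.mul_re, Complex.mul_im,
          Complex.add_re, Complex.add_im] <;> linarith [h1, h2, h3])
  have hE := key_real a.re a.im b.re b.im c.re c.im d.re d.im haR ha1 hnc
  have hform : ((!![(starRingEnd ℂ) a, -b; -((starRingEnd ℂ) b), a] *
      (!![c, d; (starRingEnd ℂ) d, (starRingEnd ℂ) c] *
        (!![a, b; (starRingEnd ℂ) b, (starRingEnd ℂ) a] *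
          !![(starRingEnd ℂ) c, -d; -((starRingEnd ℂ) d), c]))).trace).re
      = 2 + 4 * ((a.im*d.re - c.im*b.re)^2 + (a.im*d.im - c.im*b.im)^2
          - (b.im*d.re - b.re*d.im)^2) := by
    simp [Matrix.trace_fin_two, Matrix.mul_apply, Fin.sum_univ_two, Complex.mul_re,
      Complex.mul_im, Complex.add_re, Complex.add_im, Complex.sub_re, Complex.sub_im,
      Complex.neg_re, Complex.neg_im]
    linear_combination (2*(c.re^2 + c.im^2 - (d.re^2 + d.im^2) - 1) + 2) * haR + 2 * hcR
  set S := Subsemigroup.closure ({A, B} : Set (Matrix (Fin 2) (Fin 2) ℂ)) with hSdef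
  have hAS : A ∈ S := Subsemigroup.subset_closure (by simp)
  have hBS : B ∈ S := Subsemigroup.subset_closure (by simp)
  have hSU : S ≤ SU11sub := Subsemigroup.closure_le.mpr (by
    rintro X hX
    simp only [Set.mem_insert_iff, Set.mem_singleton_iff] at hX
    rcases hX with rfl | rfl
    · exact hA
    · exact hB)
  have hAiT : A.trace • (1 : Matrix (Fin 2) (Fin 2) ℂ) - A ∈ S.topologicalClosure :=
    inv_mem_closure hA hAim hAtr hAS
  have hBiT : B.trace • (1 : Matrix (Fin 2) (Fin 2) ℂ) - B ∈ S.topologicalClosure :=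
    inv_mem_closure hB hBim hBtr hBS
  have hAT : A ∈ S.topologicalClosure := S.le_topologicalClosure hAS
  have hBT : B ∈ S.topologicalClosure := S.le_topologicalClosure hBS
  have hC0T : (A.trace • (1 : Matrix (Fin 2) (Fin 2) ℂ) - A) *
      (B * (A * (B.trace • (1 : Matrix (Fin 2) (Fin 2) ℂ) - B))) ∈ S.topologicalClosure :=
    Subsemigroup.mul_mem _ hAiT (Subsemigroup.mul_mem _ hBT (Subsemigroup.mul_mem _ hAT hBiT))
  have hC0tr : 2 < (Matrix.trace ((A.trace • (1 : Matrix (Fin 2) (Fin 2) ℂ) - A) *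
      (B * (A * (B.trace • (1 : Matrix (Fin 2) (Fin 2) ℂ) - B))))).re := by
    rw [hAieq, hBieq, hAeq, hBeq, hform]
    linarith
  have hopen : IsOpen {M : Matrix (Fin 2) (Fin 2) ℂ | 2 < (Matrix.trace M).re} :=
    isOpen_lt continuous_const (Complex.continuous_re.comp continuous_id.matrix_trace)
  obtain ⟨C, hCo, hCS⟩ := mem_closure_iff.mp hC0T _ hopen hC0tr
  exact ⟨C, hCS, su11_trace_im (hSU hCS), lt_of_lt_of_le hCo (le_abs_self _)⟩
end

section
/- Suppose A, B ∈ SL(2,ℝ) are elliptic (trace in (−2,2)) and AB ≠ BA. Then the semigroup generated by A and B contains a hyperbolic element of SL(2,ℝ) (an element with |trace| > 2). -/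
open Matrix

private lemma aux_pow_mem {M : Type*} [Monoid M] (S : Subsemigroup M) {x : M}
    (hx : x ∈ S) : ∀ n : ℕ, 1 ≤ n → x ^ n ∈ S := by
  intro n hn
  induction n with
  | zero => omega
  | succ k ih =>
    rcases Nat.lt_or_ge k 1 with h | h
    · have : k = 0 := by omega
      subst this
      simpa using hx
    · rw [pow_succ]
      exact S.mul_mem (ih h) hx

private lemma aux_key_pos (a b c d p q r s : ℝ) (h1 : a * d - b * c = 1)
    (he : (a + d) ^ 2 < 4)
    (hne : ¬(b * r - c * q = 0 ∧ q * (a - d) - b * (p - s) = 0 ∧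
      c * (p - s) - r * (a - d) = 0)) :
    0 < (b * r - c * q) ^ 2 +
      (q * (a - d) - b * (p - s)) * (c * (p - s) - r * (a - d)) := by
  have hbc : b * c < 0 := by nlinarith [sq_nonneg (a - d)]
  by_contra hle
  push_neg at hle
  have KI : (-4 * (b * c)) * ((b * r - c * q) ^ 2 +
      (q * (a - d) - b * (p - s)) * (c * (p - s) - r * (a - d)))
      = (4 - (a + d) ^ 2) * (b * r - c * q) ^ 2 +
        ((a - d) * (c * q + b * r) - 2 * b * c * (p - s)) ^ 2 := by
    linear_combination (4 * (b * r - c * q) ^ 2) * h1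
  have h4 : (0 : ℝ) < -4 * (b * c) := by linarith
  have hprod : (-4 * (b * c)) * ((b * r - c * q) ^ 2 +
      (q * (a - d) - b * (p - s)) * (c * (p - s) - r * (a - d))) ≤ 0 :=
    mul_nonpos_iff.2 (Or.inl ⟨h4.le, hle⟩)
  have hRHS : (4 - (a + d) ^ 2) * (b * r - c * q) ^ 2 +
      ((a - d) * (c * q + b * r) - 2 * b * c * (p - s)) ^ 2 ≤ 0 := by
    rw [← KI]; exact hprod
  have hu2 : (b * r - c * q) ^ 2 ≤ 0 := by
    nlinarith [sq_nonneg ((a - d) * (c * q + b * r) - 2 * b * c * (p - s)),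
      sq_nonneg (b * r - c * q)]
  have hu : b * r - c * q = 0 := by
    have := le_antisymm hu2 (sq_nonneg (b * r - c * q))
    nlinarith [sq_abs (b * r - c * q), abs_nonneg (b * r - c * q), sq_nonneg (|b * r - c * q| )]
  have hM : (a - d) * (c * q + b * r) - 2 * b * c * (p - s) = 0 := by
    have hM2 : ((a - d) * (c * q + b * r) - 2 * b * c * (p - s)) ^ 2 ≤ 0 := by
      nlinarith [sq_nonneg (b * r - c * q), sq_nonneg (a + d)]
    nlinarith [sq_nonneg ((a - d) * (c * q + b * r) - 2 * b * c * (p - s))]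
  have hb : b ≠ 0 := by
    intro h; rw [h] at hbc; simp at hbc
  have hc : c ≠ 0 := by
    intro h; rw [h] at hbc; simp at hbc
  have hv : q * (a - d) - b * (p - s) = 0 := by
    have h2cv : 2 * c * (q * (a - d) - b * (p - s)) = 0 := by
      linear_combination hM - (a - d) * hu
    have := mul_eq_zero.mp h2cv
    rcases this with h | h
    · exact absurd (mul_eq_zero.mp h) (by push_neg; exact ⟨two_ne_zero, hc⟩)
    · exact h
  have hw : c * (p - s) - r * (a - d) = 0 := by
    have h2bw : 2 * b * (c * (p - s) - r * (a - d)) = 0 := by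
      linear_combination -hM - (a - d) * hu
    have := mul_eq_zero.mp h2bw
    rcases this with h | h
    · exact absurd (mul_eq_zero.mp h) (by push_neg; exact ⟨two_ne_zero, hb⟩)
    · exact h
  exact hne ⟨hu, hv, hw⟩

private lemma aux_sq (A : Matrix (Fin 2) (Fin 2) ℝ) (hA : A.det = 1) :
    A * A = A.trace • A - 1 := by
  rw [Matrix.det_fin_two] at hA
  rw [← Matrix.ext_iff]
  simp only [Fin.forall_fin_two, Matrix.mul_apply, Fin.sum_univ_two,
    Matrix.trace_fin_two, Matrix.sub_apply, Matrix.smul_apply, Matrix.one_apply,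
    smul_eq_mul]
  norm_num
  exact ⟨⟨by linear_combination (-1 : ℝ) * hA, by ring⟩, by ring,
    by linear_combination (-1 : ℝ) * hA⟩

private lemma aux_pow_eq (A : Matrix (Fin 2) (Fin 2) ℝ) (hA : A.det = 1) (θ : ℝ)
    (htr : A.trace = 2 * Real.cos θ) (n : ℕ) :
    Real.sin θ • A ^ n
      = Real.sin ((n : ℝ) * θ) • A
        - Real.sin (((n : ℝ) - 1) * θ) • (1 : Matrix (Fin 2) (Fin 2) ℝ) := by
  induction n with
  | zero =>
    simp only [pow_zero, Nat.cast_zero, zero_mul, Real.sin_zero, zero_smul, zero_sub,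
      zero_sub, neg_mul, one_mul, Real.sin_neg, neg_smul, neg_neg]
  | succ k ih =>
    have key : Real.sin θ • A ^ (k + 1) = (Real.sin θ • A ^ k) * A := by
      rw [pow_succ, smul_mul_assoc]
    rw [key, ih, sub_mul, smul_mul_assoc, smul_mul_assoc, one_mul, aux_sq A hA, htr]
    have h1 : Real.sin (((k : ℕ) + 1 : ℝ) * θ)
        = 2 * Real.cos θ * Real.sin ((k : ℝ) * θ) - Real.sin (((k : ℝ) - 1) * θ) := by
      have e1 : ((k : ℝ) + 1) * θ = (k : ℝ) * θ + θ := by ring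
      have e2 : ((k : ℝ) - 1) * θ = (k : ℝ) * θ - θ := by ring
      rw [e1, e2, Real.sin_add, Real.sin_sub]; ring
    have h2 : ((k + 1 : ℕ) : ℝ) = (k : ℝ) + 1 := by push_cast; ring
    rw [h2]
    have h3 : ((k : ℝ) + 1) - 1 = (k : ℝ) := by ring
    rw [h3]
    match_scalars
    · linear_combination (-1 : ℝ) * h1
    · ring

open Filter Topology in
private lemma aux_tendsto_adj (A : Matrix (Fin 2) (Fin 2) ℝ) (hA : A.det = 1)
    (htr : A.trace ∈ Set.Ioo (-2 : ℝ) 2) :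
    ∃ m : ℕ → ℕ, (∀ k, 1 ≤ m k) ∧
      Tendsto (fun k => A ^ m k) atTop
        (𝓝 (A.trace • (1 : Matrix (Fin 2) (Fin 2) ℝ) - A)) := by
  obtain ⟨hl, hr⟩ := htr
  have hx1 : -1 < A.trace / 2 := by linarith
  have hx2 : A.trace / 2 < 1 := by linarith
  set θ := Real.arccos (A.trace / 2) with hθ
  have hcos : Real.cos θ = A.trace / 2 := Real.cos_arccos (by linarith) (by linarith)
  have htrθ : A.trace = 2 * Real.cos θ := by rw [hcos]; ring
  have hθpos : 0 < θ := Real.arccos_pos.2 hx2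
  have hθpi : θ < Real.pi := lt_of_le_of_ne (Real.arccos_le_pi _) (fun h => by rw [Real.arccos_eq_pi] at h; linarith)
  have hsin : 0 < Real.sin θ := Real.sin_pos_of_pos_of_lt_pi hθpos hθpi
  set z : ℕ → ℂ := fun n => Complex.exp (((n : ℝ) * θ : ℝ) * Complex.I) with hz
  have hznorm : ∀ n, z n ∈ Metric.sphere (0 : ℂ) 1 := by
    intro n
    rw [mem_sphere_zero_iff_norm, hz]
    dsimp only
    rw [Complex.norm_exp_ofReal_mul_I]
  obtain ⟨L, hL, φ, hφ, hconv⟩ := (isCompact_sphere (0 : ℂ) 1).tendsto_subseq hznorm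
  have hL0 : L ≠ 0 := by
    rw [mem_sphere_zero_iff_norm] at hL
    intro h; rw [h] at hL; simp at hL
  have hzne : ∀ n, z n ≠ 0 := fun n => Complex.exp_ne_zero _
  have hzadd : ∀ i j, z (i + j) = z i * z j := by
    intro i j
    rw [hz]
    dsimp only
    rw [← Complex.exp_add]
    congr 1
    push_cast
    ring
  have hconv' : Tendsto (fun k => z (φ (k + 1))) atTop (𝓝 L) :=
    hconv.comp (tendsto_add_atTop_nat 1)
  set g : ℕ → ℕ := fun k => φ (k + 1) - φ k with hg
  have hglt : ∀ k, φ k < φ (k + 1) := fun k => hφ (Nat.lt_succ_self k)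
  have hg1 : ∀ k, 1 ≤ g k := by
    intro k; have := hglt k; simp only [hg]; omega
  have hgadd : ∀ k, g k + φ k = φ (k + 1) := by
    intro k; have := hglt k; simp only [hg]; omega
  have hzg : ∀ k, z (g k) = z (φ (k + 1)) / z (φ k) := by
    intro k
    rw [eq_div_iff (hzne _), ← hzadd, hgadd]
  have hgz : Tendsto (fun k => z (g k)) atTop (𝓝 1) := by
    have h := hconv'.div hconv hL0
    rw [div_self hL0] at h
    have : (fun k => z (g k)) = fun k => z (φ (k + 1)) / (z ∘ φ) k := by
      funext k; exact hzg k
    rw [this]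
    exact h
  set m : ℕ → ℕ := fun k => 2 * g k - 1 with hm
  have hm1 : ∀ k, 1 ≤ m k := by
    intro k; have := hg1 k; simp only [hm]; omega
  have hmadd : ∀ k, m k + 1 = g k + g k := by
    intro k; have := hg1 k; simp only [hm]; omega
  have hz1 : z 1 = Complex.exp ((θ : ℂ) * Complex.I) := by
    rw [hz]
    dsimp only
    congr 1
    push_cast
    ring
  have hzm : ∀ k, z (m k) = z (g k) * z (g k) / z 1 := by
    intro k
    rw [eq_div_iff (hzne 1), ← hzadd, hmadd k, hzadd]
  have hzmt : Tendsto (fun k => z (m k)) atTop (𝓝 ((Complex.exp ((θ : ℂ) * Complex.I))⁻¹)) := by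
    have h := (hgz.mul hgz).div_const (z 1)
    rw [one_mul, one_div, hz1] at h
    have : (fun k => z (m k)) = fun k => z (g k) * z (g k) / z 1 := by
      funext k; exact hzm k
    rw [this, hz1]
    exact h
  have him : ∀ k, Real.sin ((m k : ℝ) * θ) = (z (m k)).im := by
    intro k; rw [hz]; dsimp only; rw [Complex.exp_ofReal_mul_I_im]
  have hre : ∀ k, Real.cos ((m k : ℝ) * θ) = (z (m k)).re := by
    intro k; rw [hz]; dsimp only; rw [Complex.exp_ofReal_mul_I_re]
  have hexpinv : (Complex.exp ((θ : ℂ) * Complex.I))⁻¹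
      = Complex.exp (((-θ : ℝ) : ℂ) * Complex.I) := by
    rw [← Complex.exp_neg]
    congr 1
    push_cast
    ring
  have hsinm : Tendsto (fun k => Real.sin ((m k : ℝ) * θ)) atTop (𝓝 (-Real.sin θ)) := by
    have hlim : Tendsto (fun k => (z (m k)).im) atTop
        (𝓝 (((Complex.exp ((θ : ℂ) * Complex.I))⁻¹).im)) :=
      (Complex.continuous_im.tendsto _).comp hzmt
    have heq : ((Complex.exp ((θ : ℂ) * Complex.I))⁻¹).im = -Real.sin θ := by
      rw [hexpinv, Complex.exp_ofReal_mul_I_im, Real.sin_neg]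
    rw [← heq]
    have : (fun k => Real.sin ((m k : ℝ) * θ)) = fun k => (z (m k)).im := by
      funext k; exact him k
    rw [this]
    exact hlim
  have hcosm : Tendsto (fun k => Real.cos ((m k : ℝ) * θ)) atTop (𝓝 (Real.cos θ)) := by
    have hlim : Tendsto (fun k => (z (m k)).re) atTop
        (𝓝 (((Complex.exp ((θ : ℂ) * Complex.I))⁻¹).re)) :=
      (Complex.continuous_re.tendsto _).comp hzmt
    have heq : ((Complex.exp ((θ : ℂ) * Complex.I))⁻¹).re = Real.cos θ := by
      rw [hexpinv, Complex.exp_ofReal_mul_I_re, Real.cos_neg]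
    rw [← heq]
    have : (fun k => Real.cos ((m k : ℝ) * θ)) = fun k => (z (m k)).re := by
      funext k; exact hre k
    rw [this]
    exact hlim
  have hsinm1 : Tendsto (fun k => Real.sin (((m k : ℝ) - 1) * θ)) atTop
      (𝓝 (-Real.sin θ * Real.cos θ - Real.cos θ * Real.sin θ)) := by
    have heq : (fun k => Real.sin (((m k : ℝ) - 1) * θ))
        = fun k => Real.sin ((m k : ℝ) * θ) * Real.cos θ
          - Real.cos ((m k : ℝ) * θ) * Real.sin θ := by
      funext k
      rw [show ((m k : ℝ) - 1) * θ = (m k : ℝ) * θ - θ by ring, Real.sin_sub]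
    rw [heq]
    exact (hsinm.mul_const (Real.cos θ)).sub (hcosm.mul_const (Real.sin θ))
  have hAm : Tendsto (fun k => Real.sin θ • A ^ m k) atTop
      (𝓝 ((-Real.sin θ) • A
        - (-Real.sin θ * Real.cos θ - Real.cos θ * Real.sin θ) • (1 : Matrix (Fin 2) (Fin 2) ℝ))) := by
    have heq : (fun k => Real.sin θ • A ^ m k)
        = fun k => Real.sin ((m k : ℝ) * θ) • A
          - Real.sin (((m k : ℝ) - 1) * θ) • (1 : Matrix (Fin 2) (Fin 2) ℝ) := by
      funext k; exact aux_pow_eq A hA θ htrθ (m k)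
    rw [heq]
    exact (hsinm.smul_const A).sub (hsinm1.smul_const 1)
  refine ⟨m, hm1, ?_⟩
  have hsne : Real.sin θ ≠ 0 := ne_of_gt hsin
  have hlimeq : (Real.sin θ)⁻¹ • ((-Real.sin θ) • A
      - (-Real.sin θ * Real.cos θ - Real.cos θ * Real.sin θ) • (1 : Matrix (Fin 2) (Fin 2) ℝ))
      = A.trace • (1 : Matrix (Fin 2) (Fin 2) ℝ) - A := by
    rw [htrθ]
    match_scalars
    · field_simp
    · field_simp
      ring
  have h := hAm.const_smul ((Real.sin θ)⁻¹)
  rw [hlimeq] at h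
  have : (fun k => (Real.sin θ)⁻¹ • (Real.sin θ • A ^ m k)) = fun k => A ^ m k := by
    funext k; rw [inv_smul_smul₀ hsne]
  rw [this] at h
  exact h

open Filter Topology in
/-- If `A, B ∈ SL(2,ℝ)` are elliptic (trace in `(−2,2)`) and do not commute, then the
semigroup generated by `A` and `B` contains a hyperbolic element of `SL(2,ℝ)`,
i.e. an element whose trace has absolute value `> 2`. -/
theorem sl2r_noncommuting_elliptic_semigroup_hyperbolic
    (A B : Matrix (Fin 2) (Fin 2) ℝ) (hA : A.det = 1) (hB : B.det = 1)
    (hAtr : A.trace ∈ Set.Ioo (-2 : ℝ) 2) (hBtr : B.trace ∈ Set.Ioo (-2 : ℝ) 2)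
    (hcomm : A * B ≠ B * A) :
    ∃ C ∈ Subsemigroup.closure {A, B}, 2 < |C.trace| := by
  obtain ⟨mA, hmA1, hmAt⟩ := aux_tendsto_adj A hA hAtr
  obtain ⟨mB, hmB1, hmBt⟩ := aux_tendsto_adj B hB hBtr
  set A' := A.trace • (1 : Matrix (Fin 2) (Fin 2) ℝ) - A with hA'
  set B' := B.trace • (1 : Matrix (Fin 2) (Fin 2) ℝ) - B with hB'
  have hdetA : A 0 0 * A 1 1 - A 0 1 * A 1 0 = 1 := by
    rw [← Matrix.det_fin_two]; exact hA
  have hdetB : B 0 0 * B 1 1 - B 0 1 * B 1 0 = 1 := by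
    rw [← Matrix.det_fin_two]; exact hB
  have htrsq : (A 0 0 + A 1 1) ^ 2 < 4 := by
    have h1 : A.trace = A 0 0 + A 1 1 := Matrix.trace_fin_two A
    obtain ⟨ha, hb⟩ := hAtr
    rw [h1] at ha hb
    nlinarith
  have hne : ¬(A 0 1 * B 1 0 - A 1 0 * B 0 1 = 0 ∧
      B 0 1 * (A 0 0 - A 1 1) - A 0 1 * (B 0 0 - B 1 1) = 0 ∧
      A 1 0 * (B 0 0 - B 1 1) - B 1 0 * (A 0 0 - A 1 1) = 0) := by
    rintro ⟨h1, h2, h3⟩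
    apply hcomm
    rw [← Matrix.ext_iff]
    simp only [Fin.forall_fin_two, Matrix.mul_apply, Fin.sum_univ_two]
    refine ⟨⟨?_, ?_⟩, ?_, ?_⟩
    · linear_combination h1
    · linear_combination h2
    · linear_combination h3
    · linear_combination (-1 : ℝ) * h1
  have hkey := aux_key_pos (A 0 0) (A 0 1) (A 1 0) (A 1 1)
    (B 0 0) (B 0 1) (B 1 0) (B 1 1) hdetA htrsq hne
  have htrZ : (A * B * A' * B').trace
      = 2 + ((A 0 1 * B 1 0 - A 1 0 * B 0 1) ^ 2 +
        (B 0 1 * (A 0 0 - A 1 1) - A 0 1 * (B 0 0 - B 1 1)) *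
        (A 1 0 * (B 0 0 - B 1 1) - B 1 0 * (A 0 0 - A 1 1))) := by
    rw [hA', hB']
    simp only [Matrix.trace_fin_two, Matrix.mul_apply, Fin.sum_univ_two,
      Matrix.sub_apply, Matrix.smul_apply, Matrix.one_apply, Matrix.trace_fin_two,
      smul_eq_mul]
    norm_num
    linear_combination (2 * B 0 0 * B 1 1 - 2 * B 0 1 * B 1 0) * hdetA + 2 * hdetB
  have h2 : 2 < (A * B * A' * B').trace := by rw [htrZ]; linarith
  have hW : Tendsto (fun k => A * B * A ^ mA k * B ^ mB k) atTop
      (𝓝 (A * B * A' * B')) :=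
    ((tendsto_const_nhds.mul hmAt).mul hmBt)
  have htrt : Tendsto (fun k => (A * B * A ^ mA k * B ^ mB k).trace) atTop
      (𝓝 ((A * B * A' * B').trace)) :=
    ((continuous_id.matrix_trace).tendsto _).comp hW
  have hev : ∀ᶠ k in atTop, 2 < (A * B * A ^ mA k * B ^ mB k).trace :=
    htrt.eventually (eventually_gt_nhds h2)
  obtain ⟨k, hk⟩ := hev.exists
  refine ⟨A * B * A ^ mA k * B ^ mB k, ?_, lt_of_lt_of_le hk (le_abs_self _)⟩
  have hAmem : A ∈ Subsemigroup.closure {A, B} :=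
    Subsemigroup.subset_closure (Set.mem_insert _ _)
  have hBmem : B ∈ Subsemigroup.closure {A, B} :=
    Subsemigroup.subset_closure (Set.mem_insert_of_mem _ rfl)
  exact mul_mem (mul_mem (mul_mem hAmem hBmem)
    (aux_pow_mem _ hAmem _ (hmA1 k))) (aux_pow_mem _ hBmem _ (hmB1 k))
end

section
/- Let G denote the set of Gordon-type elements of the space LP(ℝ,ℂ) of uniformly limit-periodic continuous functions ℝ → ℂ, i.e. functions φ for which there exist q_k → ∞ with C^{q_k} · sup_{0 ≤ x < q_k} |φ(x ± q_k) − φ(x)| → 0 for every C > 0. Then G is a dense G_δ subset of LP(ℝ,ℂ) (with the uniform metric). -/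
open Filter BoundedContinuousFunction

def LPspace : Set (ℝ →ᵇ ℂ) := closure {f : ℝ →ᵇ ℂ | ∃ T > (0 : ℝ), ∀ x, f (x + T) = f x}

def GordonType (f : ℝ →ᵇ ℂ) : Prop :=
  ∃ q : ℕ → ℝ, (∀ k, 0 < q k) ∧ Tendsto q atTop atTop ∧
    ∀ C > (0 : ℝ), Tendsto
      (fun k => C ^ (q k) * ⨆ x : Set.Ico (0 : ℝ) (q k),
          max ‖f ((x : ℝ) + q k) - f (x : ℝ)‖
              ‖f ((x : ℝ) - q k) - f (x : ℝ)‖)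
      atTop (nhds 0)

noncomputable def Dq (f : ℝ →ᵇ ℂ) (q : ℝ) : ℝ :=
  ⨆ x : Set.Ico (0 : ℝ) q,
      max ‖f ((x : ℝ) + q) - f (x : ℝ)‖
          ‖f ((x : ℝ) - q) - f (x : ℝ)‖

lemma Dq_nonneg (f : ℝ →ᵇ ℂ) (q : ℝ) : 0 ≤ Dq f q :=
  Real.iSup_nonneg fun x => le_max_of_le_left (norm_nonneg _)

lemma Dq_bdd (f : ℝ →ᵇ ℂ) (q : ℝ) :
    BddAbove (Set.range fun x : Set.Ico (0 : ℝ) q =>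
      max ‖f ((x : ℝ) + q) - f (x : ℝ)‖
          ‖f ((x : ℝ) - q) - f (x : ℝ)‖) := by
  refine ⟨2 * ‖f‖, ?_⟩
  rintro _ ⟨x, rfl⟩
  have h : ∀ a b : ℝ, ‖f a - f b‖ ≤ 2 * ‖f‖ := fun a b => by
    calc ‖f a - f b‖ ≤ ‖f a‖ + ‖f b‖ := norm_sub_le _ _
      _ ≤ ‖f‖ + ‖f‖ := add_le_add (f.norm_coe_le_norm a) (f.norm_coe_le_norm b)
      _ = 2 * ‖f‖ := by ring
  exact max_le (h _ _) (h _ _)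

lemma Dq_eq_zero (f : ℝ →ᵇ ℂ) (q : ℝ) (hf : ∀ x, f (x + q) = f x) : Dq f q = 0 := by
  refine le_antisymm (Real.iSup_le (fun x => ?_) le_rfl) (Dq_nonneg f q)
  have h1 : f ((x : ℝ) + q) = f (x : ℝ) := hf _
  have h2 : f ((x : ℝ) - q) = f (x : ℝ) := by
    have := hf ((x : ℝ) - q); rw [sub_add_cancel] at this; exact this.symm
  simp [h1, h2]

lemma Dq_le (f g : ℝ →ᵇ ℂ) (q : ℝ) : Dq g q ≤ Dq f q + 2 * dist f g := by
  refine Real.iSup_le (fun x => ?_)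
    (add_nonneg (Dq_nonneg f q) (by positivity))
  have key : ∀ a b : ℝ, ‖g a - g b‖ ≤ ‖f a - f b‖ + 2 * dist f g := by
    intro a b
    have e : ∀ u v : ℂ, ‖u - v‖ = dist u v := fun u v => (Complex.dist_eq u v).symm
    rw [e, e]
    calc dist (g a) (g b) ≤ dist (g a) (f a) + dist (f a) (f b) + dist (f b) (g b) :=
          dist_triangle4 _ _ _ _
      _ ≤ dist g f + dist (f a) (f b) + dist f g := by
          gcongr
          · exact BoundedContinuousFunction.dist_coe_le_dist a
          · exact BoundedContinuousFunction.dist_coe_le_dist b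
      _ = dist (f a) (f b) + 2 * dist f g := by rw [dist_comm g f]; ring
  have hx : max ‖f ((x : ℝ) + q) - f (x : ℝ)‖
      ‖f ((x : ℝ) - q) - f (x : ℝ)‖ ≤ Dq f q := le_ciSup (Dq_bdd f q) x
  refine max_le ?_ ?_
  · exact le_trans (key _ _) (add_le_add_left (le_trans (le_max_left _ _) hx) _)
  · exact le_trans (key _ _) (add_le_add_left (le_trans (le_max_right _ _) hx) _)

lemma isOpen_Aq (N : ℕ) (q : ℝ) :
    IsOpen {f : ℝ →ᵇ ℂ | ((N : ℝ) + 1) ^ q * Dq f q < 1 / ((N : ℝ) + 1)} := by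
  rw [Metric.isOpen_iff]
  intro f hf
  set c : ℝ := ((N : ℝ) + 1) ^ q with hc
  have hcpos : 0 < c := Real.rpow_pos_of_pos (by positivity) _
  have hf' : c * Dq f q < 1 / ((N : ℝ) + 1) := hf
  refine ⟨(1 / ((N : ℝ) + 1) - c * Dq f q) / (2 * c), div_pos (by linarith) (by positivity), ?_⟩
  intro g hg
  rw [Metric.mem_ball] at hg
  have hD : Dq g q ≤ Dq f q + 2 * dist f g := Dq_le f g q
  have : c * Dq g q ≤ c * Dq f q + 2 * c * dist f g := by
    calc c * Dq g q ≤ c * (Dq f q + 2 * dist f g) := by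
          exact mul_le_mul_of_nonneg_left hD hcpos.le
      _ = c * Dq f q + 2 * c * dist f g := by ring
  have hlt : 2 * c * dist f g < 1 / ((N : ℝ) + 1) - c * Dq f q := by
    rw [dist_comm]
    calc 2 * c * dist g f < 2 * c * ((1 / ((N : ℝ) + 1) - c * Dq f q) / (2 * c)) := by
          apply mul_lt_mul_of_pos_left hg (by positivity)
      _ = 1 / ((N : ℝ) + 1) - c * Dq f q := by
          rw [mul_comm, div_mul_cancel₀ _ (by positivity : (2 * c) ≠ (0:ℝ))]
  show c * Dq g q < 1 / ((N : ℝ) + 1)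
  linarith

set_option synthInstance.maxHeartbeats 1000000 in
/-- The set of Gordon-type elements of `LP(ℝ,ℂ)` is a dense `G_δ` subset of `LP(ℝ,ℂ)`
(with the uniform metric, i.e. the subspace topology). -/
theorem gordonType_dense_Gdelta :
    IsGδ {f : LPspace | GordonType (f : ℝ →ᵇ ℂ)} ∧
    Dense {f : LPspace | GordonType (f : ℝ →ᵇ ℂ)} := by
  -- ambient open sets
  set A : ℕ → Set (ℝ →ᵇ ℂ) := fun N =>
    ⋃ q ∈ Set.Ioi ((N : ℝ) + 1), {f | ((N : ℝ) + 1) ^ q * Dq f q < 1 / ((N : ℝ) + 1)} with hA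
  have hAopen : ∀ N, IsOpen (A N) := fun N =>
    isOpen_biUnion fun q _ => isOpen_Aq N q
  have hAmem : ∀ (f : ℝ →ᵇ ℂ) (N : ℕ),
      f ∈ A N ↔ ∃ q > (N : ℝ) + 1, ((N : ℝ) + 1) ^ q * Dq f q < 1 / ((N : ℝ) + 1) := by
    intro f N
    simp [hA, Set.mem_Ioi]
  -- characterization
  have hchar : ∀ f : ℝ →ᵇ ℂ, GordonType f ↔ ∀ N, f ∈ A N := by
    intro f
    constructor
    · rintro ⟨q, hqpos, hqtop, hC⟩ N
      have hN1 : (0 : ℝ) < (N : ℝ) + 1 := by positivity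
      have h1 : ∀ᶠ k in atTop,
          ((N : ℝ) + 1) ^ (q k) * Dq f (q k) < 1 / ((N : ℝ) + 1) := by
        have := hC ((N : ℝ) + 1) hN1
        exact this.eventually_lt_const (by positivity)
      have h2 : ∀ᶠ k in atTop, (N : ℝ) + 1 < q k := hqtop.eventually_gt_atTop _
      obtain ⟨k, hk1, hk2⟩ := (h1.and h2).exists
      exact (hAmem f N).2 ⟨q k, hk2, hk1⟩
    · intro h
      choose q hq1 hq2 using fun N => (hAmem f N).1 (h N)
      refine ⟨q, fun k => lt_trans (by positivity) (hq1 k), ?_, ?_⟩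
      · exact tendsto_atTop_mono (fun k => (hq1 k).le)
          (tendsto_atTop_add_const_right _ 1 tendsto_natCast_atTop_atTop)
      · intro C hC
        have hub : Tendsto (fun N : ℕ => 1 / ((N : ℝ) + 1)) atTop (nhds 0) :=
          tendsto_one_div_add_atTop_nhds_zero_nat
        refine tendsto_of_tendsto_of_tendsto_of_le_of_le' tendsto_const_nhds hub ?_ ?_
        · filter_upwards with k
          exact mul_nonneg (Real.rpow_nonneg hC.le _) (Dq_nonneg f _)
        · filter_upwards [eventually_ge_atTop ⌈C⌉₊] with k hk
          have hCk : C ≤ (k : ℝ) + 1 :=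
            le_trans (Nat.le_ceil C) (by exact_mod_cast le_trans (Nat.cast_le.mpr hk) (le_add_of_nonneg_right zero_le_one))
          have hq0 : (0 : ℝ) ≤ q k := (lt_trans (by positivity) (hq1 k)).le
          calc C ^ (q k) * Dq f (q k) ≤ ((k : ℝ) + 1) ^ (q k) * Dq f (q k) := by
                apply mul_le_mul_of_nonneg_right _ (Dq_nonneg f _)
                exact Real.rpow_le_rpow hC.le hCk hq0
            _ ≤ 1 / ((k : ℝ) + 1) := (hq2 k).le
  -- rewrite target set
  have hset : {f : LPspace | GordonType (f : ℝ →ᵇ ℂ)} =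
      ⋂ N, (Subtype.val ⁻¹' (A N) : Set LPspace) := by
    ext f
    simp only [Set.mem_setOf_eq, Set.mem_iInter, Set.mem_preimage, hchar]
  -- openness and density in the subspace
  have hopen : ∀ N, IsOpen ((Subtype.val ⁻¹' (A N)) : Set LPspace) :=
    fun N => (hAopen N).preimage continuous_subtype_val
  have hdense : ∀ N, Dense ((Subtype.val ⁻¹' (A N)) : Set LPspace) := by
    intro N
    rw [Metric.dense_iff]
    intro f r hr
    have hf : (f : ℝ →ᵇ ℂ) ∈ closure {g : ℝ →ᵇ ℂ | ∃ T > (0 : ℝ), ∀ x, g (x + T) = g x} := f.2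
    rw [Metric.mem_closure_iff] at hf
    obtain ⟨p, ⟨T, hT, hper⟩, hpd⟩ := hf r hr
    have hpLP : p ∈ LPspace := subset_closure ⟨T, hT, hper⟩
    refine ⟨⟨p, hpLP⟩, ?_, ?_⟩
    · rw [Metric.mem_ball, Subtype.dist_eq, dist_comm]
      exact hpd
    · rw [Set.mem_preimage, hAmem]
      obtain ⟨n, hn⟩ := exists_nat_gt (((N : ℝ) + 2) / T)
      have hnT : (N : ℝ) + 1 < n * T := by
        have h2 : ((N : ℝ) + 2) < n * T := by
          rw [div_lt_iff₀ hT] at hn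
          linarith
        linarith
      refine ⟨n * T, hnT, ?_⟩
      have hper' : ∀ x, p (x + n * T) = p x := by
        intro x
        have : Function.Periodic p T := hper
        have := (this.nat_mul n) x
        simpa [mul_comm] using this
      rw [Dq_eq_zero p _ hper', mul_zero]
      positivity
  -- conclude
  haveI : CompleteSpace LPspace := isClosed_closure.completeSpace_coe
  rw [hset]
  constructor
  · exact IsGδ.iInter fun N => (hopen N).isGδ
  · exact dense_iInter_of_isOpen hopen hdense
end
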